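/- Let T = {E₁ − E₂, E₂ − E₃, E₃ − E₄, E₄ − E₅, E₅ − E₆, 2L − E₁ − E₂ − E₃ − E₄ − E₅ − E₆} (the configuration type A₁A₅c). Then the torsion subgroup of V/⟨T⟩, where ⟨T⟩ is the subgroup of V generated by T, is isomorphic to ℤ/2ℤ. -/

import Mathlib

abbrev V : Type := Fin 7 → ℤ

def form (x y : V) : ℤ := x 0 * y 0 - ∑ i : Fin 6, x i.succ * y i.succ

def Lv : V := fun j => if j = 0 then 1 else 0

def Ev (i : Fin 6) : V := fun j => if j = i.succ then 1 else 0

def Kv : V := -(3 : ℤ) • Lv + ∑ i : Fin 6, Ev i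

def Vpp : Set V := {v | ∃ i j : Fin 6, i < j ∧ v = Ev i - Ev j}

def Lpp : Set V := {v | ∃ i j k : Fin 6, i < j ∧ j < k ∧ v = Lv - Ev i - Ev j - Ev k}

def Qpp : Set V := {v | v = (2 : ℤ) • Lv - ∑ i : Fin 6, Ev i}

def Rset : Set V := Vpp ∪ Lpp ∪ Qpp

def PairwiseNonneg (T : Set V) : Prop := ∀ C ∈ T, ∀ D ∈ T, C ≠ D → 0 ≤ form C D

lemma Ev_apply (i : Fin 6) (j : Fin 7) : Ev i j = if (j:ℕ) = (i:ℕ)+1 then 1 else 0 := by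
  simp [Ev, Fin.ext_iff]

lemma Lv_apply (j : Fin 7) : Lv j = if (j:ℕ) = 0 then 1 else 0 := by
  simp [Lv]

/-- The auxiliary homomorphism `V →+ ℤ × ZMod 2`. -/
def phi : V →+ ℤ × ZMod 2 where
  toFun x := (3 * x 0 + ∑ i : Fin 6, x i.succ, ((x 0 : ℤ) : ZMod 2))
  map_zero' := by simp
  map_add' x y := by
    refine Prod.ext ?_ ?_
    · simp [Finset.sum_add_distrib]; ring
    · push_cast [Pi.add_apply, Prod.snd_add]; ring

lemma phi_surj : Function.Surjective phi := by
  rintro ⟨n, a⟩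
  refine ⟨fun j => if j = 0 then (a.val : ℤ) else if j = 1 then n - 3 * a.val else 0, ?_⟩
  refine Prod.ext ?_ ?_
  · show 3 * _ + _ = n
    rw [Fin.sum_univ_six]
    simp only [Fin.ext_iff, Fin.val_succ,
      show ((0:Fin 6):ℕ)=0 from rfl, show ((1:Fin 6):ℕ)=1 from rfl,
      show ((2:Fin 6):ℕ)=2 from rfl, show ((3:Fin 6):ℕ)=3 from rfl,
      show ((4:Fin 6):ℕ)=4 from rfl, show ((5:Fin 6):ℕ)=5 from rfl,
      show ((0:Fin 7):ℕ)=0 from rfl, show ((1:Fin 7):ℕ)=1 from rfl]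
    norm_num
  · show ((_ : ℤ) : ZMod 2) = a
    simp only [Fin.ext_iff, show ((0:Fin 7):ℕ)=0 from rfl]
    norm_num [ZMod.natCast_val, ZMod.cast_id]

/-- Torsion subgroups of isomorphic groups are isomorphic. -/
def torsionEquivOfEquiv {G H : Type*} [AddCommGroup G] [AddCommGroup H] (e : G ≃+ H) :
    AddCommGroup.torsion G ≃+ AddCommGroup.torsion H where
  toFun x := ⟨e x.1, e.toAddMonoidHom.isOfFinAddOrder x.2⟩
  invFun y := ⟨e.symm y.1, e.symm.toAddMonoidHom.isOfFinAddOrder y.2⟩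
  left_inv x := by simp
  right_inv y := by simp
  map_add' x y := Subtype.ext (by simp)

/-- The torsion of `ℤ × ZMod 2` is `ZMod 2`. -/
def torsionProdEquiv : AddCommGroup.torsion (ℤ × ZMod 2) ≃+ ZMod 2 where
  toFun x := x.1.2
  invFun a := ⟨(0, a), by
    rw [AddCommGroup.mem_torsion, isOfFinAddOrder_iff_nsmul_eq_zero]
    refine ⟨2, by norm_num, ?_⟩
    refine Prod.ext (by simp) ?_
    show (2 : ℕ) • a = 0
    rw [nsmul_eq_mul]
    push_cast
    rw [show (2 : ZMod 2) = 0 by decide]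
    ring⟩
  left_inv x := by
    obtain ⟨⟨n, a⟩, hx⟩ := x
    rw [AddCommGroup.mem_torsion, isOfFinAddOrder_iff_nsmul_eq_zero] at hx
    obtain ⟨k, hk, hkn⟩ := hx
    have h1 : k • n = 0 := congrArg Prod.fst hkn
    rw [nsmul_eq_mul] at h1
    have hn : n = 0 := by
      rcases mul_eq_zero.mp h1 with h | h
      · exact absurd (by exact_mod_cast h : k = 0) hk.ne'
      · exact h
    simp [hn]
  right_inv a := rfl
  map_add' x y := rfl

/-- for the configuration type `A₁A₅c`,
`T = {E₁−E₂, E₂−E₃, E₃−E₄, E₄−E₅, E₅−E₆, 2L−E₁−⋯−E₆}`, the torsion subgroup of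
`V/⟨T⟩` is isomorphic to `ℤ/2ℤ`. -/
theorem torsion_A1A5c :
    Nonempty ((AddCommGroup.torsion
      (V ⧸ AddSubgroup.closure ({Ev 0 - Ev 1, Ev 1 - Ev 2, Ev 2 - Ev 3, Ev 3 - Ev 4,
        Ev 4 - Ev 5, (2 : ℤ) • Lv - ∑ i : Fin 6, Ev i} : Set V))) ≃+ ZMod 2) := by
  set S : Set V := {Ev 0 - Ev 1, Ev 1 - Ev 2, Ev 2 - Ev 3, Ev 3 - Ev 4,
        Ev 4 - Ev 5, (2 : ℤ) • Lv - ∑ i : Fin 6, Ev i} with hS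
  have hker : phi.ker = AddSubgroup.closure S := by
    apply le_antisymm
    · -- ker ⊆ closure
      intro x hx
      have h := AddMonoidHom.mem_ker.mp hx
      have h1 : 3 * x 0 + ∑ i : Fin 6, x i.succ = 0 := congrArg Prod.fst h
      have h2' : ((x 0 : ℤ) : ZMod 2) = 0 := congrArg Prod.snd h
      have h2 : (2 : ℤ) ∣ x 0 := by
        have := (ZMod.intCast_zmod_eq_zero_iff_dvd (x 0) 2).mp h2'
        exact_mod_cast this
      obtain ⟨t, ht⟩ := h2
      rw [Fin.sum_univ_six] at h1
      have h1' : 3 * x 0 + (x 1 + x 2 + x 3 + x 4 + x 5 + x 6) = 0 := h1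
      clear h1
      set g1 := Ev 0 - Ev 1 with hg1
      set g2 := Ev 1 - Ev 2 with hg2
      set g3 := Ev 2 - Ev 3 with hg3
      set g4 := Ev 3 - Ev 4 with hg4
      set g5 := Ev 4 - Ev 5 with hg5
      set g6 := (2 : ℤ) • Lv - ∑ i : Fin 6, Ev i with hg6
      have hx_eq : x = (x 1 + t) • g1 + (x 1 + x 2 + 2*t) • g2
          + (x 1 + x 2 + x 3 + 3*t) • g3 + (x 1 + x 2 + x 3 + x 4 + 4*t) • g4
          + (x 1 + x 2 + x 3 + x 4 + x 5 + 5*t) • g5 + t • g6 := by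
        funext j
        fin_cases j <;>
          simp [hg1, hg2, hg3, hg4, hg5, hg6, Ev_apply, Lv_apply, Fin.sum_univ_six,
            show ((0:Fin 6):ℕ)=0 from rfl, show ((1:Fin 6):ℕ)=1 from rfl,
            show ((2:Fin 6):ℕ)=2 from rfl, show ((3:Fin 6):ℕ)=3 from rfl,
            show ((4:Fin 6):ℕ)=4 from rfl, show ((5:Fin 6):ℕ)=5 from rfl,
            show ((0:Fin 7):ℕ)=0 from rfl, show ((1:Fin 7):ℕ)=1 from rfl,
            show ((2:Fin 7):ℕ)=2 from rfl, show ((3:Fin 7):ℕ)=3 from rfl,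
            show ((4:Fin 7):ℕ)=4 from rfl, show ((5:Fin 7):ℕ)=5 from rfl,
            show ((6:Fin 7):ℕ)=6 from rfl] <;> omega
      rw [hx_eq]
      have m1 : g1 ∈ AddSubgroup.closure S := AddSubgroup.subset_closure (by simp [hS, hg1])
      have m2 : g2 ∈ AddSubgroup.closure S := AddSubgroup.subset_closure (by simp [hS, hg2])
      have m3 : g3 ∈ AddSubgroup.closure S := AddSubgroup.subset_closure (by simp [hS, hg3])
      have m4 : g4 ∈ AddSubgroup.closure S := AddSubgroup.subset_closure (by simp [hS, hg4])
      have m5 : g5 ∈ AddSubgroup.closure S := AddSubgroup.subset_closure (by simp [hS, hg5])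
      have m6 : g6 ∈ AddSubgroup.closure S := AddSubgroup.subset_closure (by simp [hS, hg6])
      exact add_mem (add_mem (add_mem (add_mem (add_mem
        (zsmul_mem m1 _) (zsmul_mem m2 _)) (zsmul_mem m3 _)) (zsmul_mem m4 _))
        (zsmul_mem m5 _)) (zsmul_mem m6 _)
    · -- closure ⊆ ker
      rw [AddSubgroup.closure_le]
      intro v hv
      simp only [hS, Set.mem_insert_iff, Set.mem_singleton_iff] at hv
      rcases hv with h|h|h|h|h|h <;> subst h <;>
        · show phi _ = 0
          refine Prod.ext ?_ ?_ <;>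
            simp [phi, Ev_apply, Lv_apply, Fin.sum_univ_six,
              show ((0:Fin 6):ℕ)=0 from rfl, show ((1:Fin 6):ℕ)=1 from rfl,
              show ((2:Fin 6):ℕ)=2 from rfl, show ((3:Fin 6):ℕ)=3 from rfl,
              show ((4:Fin 6):ℕ)=4 from rfl, show ((5:Fin 6):ℕ)=5 from rfl] <;>
            try decide
  have e : (V ⧸ AddSubgroup.closure S) ≃+ ℤ × ZMod 2 := by
    rw [← hker]
    exact QuotientAddGroup.quotientKerEquivOfSurjective phi phi_surj
  exact ⟨(torsionEquivOfEquiv e).trans torsionProdEquiv⟩
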